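/- Let (P,≤,',0,1) be a finite distributive consistent poset. Define set-valued operators on P by x⊙y := {0} if x ≤ y' and x⊙y := Max L(x,y) otherwise, and x→y := {1} if x ≤ y and x→y := Min U(x',y) otherwise, where Max and Min denote the sets of maximal and minimal elements. Then for all x,y,z ∈ P: (i) x⊙y = y⊙x; (ii) x⊙1 = 1⊙x = {x}; (iii) every element of x⊙y is ≤ z if and only if x ≤ every element of y→z (adjointness). -/

import Mathlib

/-- `f` is an antitone involution on the poset `P`. -/
def AntitoneInvolution {P : Type*} [PartialOrder P] (f : P → P) : Prop :=
  (∀ x, f (f x) = x) ∧ ∀ x y : P, x ≤ y → f y ≤ f x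

/-- A consistent poset: a bounded poset with an antitone involution `f` satisfying
(8) `L(x,x') = L(y,y')` for all `x,y ∉ {0,1}` and (9) `L(x,y) ≠ {0}` for `x,y ≠ 0`. -/
def ConsistentPoset {P : Type*} [PartialOrder P] [BoundedOrder P] (f : P → P) : Prop :=
  AntitoneInvolution f ∧
  (∀ x y : P, x ≠ ⊥ → x ≠ ⊤ → y ≠ ⊥ → y ≠ ⊤ →
    lowerBounds {x, f x} = lowerBounds {y, f y}) ∧
  (∀ x y : P, x ≠ ⊥ → y ≠ ⊥ → lowerBounds {x, y} ≠ ({⊥} : Set P))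

/-- A poset is distributive if `L(U(x,y),z) = L(U(L(x,z) ∪ L(y,z)))` for all `x,y,z`. -/
def DistributivePoset (P : Type*) [PartialOrder P] : Prop :=
  ∀ x y z : P,
    lowerBounds (upperBounds {x, y} ∪ {z}) =
      lowerBounds (upperBounds (lowerBounds {x, z} ∪ lowerBounds {y, z}))

/-- The set of maximal elements of `s`. -/
def maxSet {P : Type*} [PartialOrder P] (s : Set P) : Set P := {x | Maximal (· ∈ s) x}

/-- The set of minimal elements of `s`. -/
def minSet {P : Type*} [PartialOrder P] (s : Set P) : Set P := {x | Minimal (· ∈ s) x}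

open Classical in
/-- The operator `x ⊙ y` of (13). -/
noncomputable def odot {P : Type*} [PartialOrder P] [BoundedOrder P] (f : P → P)
    (x y : P) : Set P :=
  if x ≤ f y then {⊥} else maxSet (lowerBounds {x, y})

open Classical in
/-- The operator `x → y` of (13). -/
noncomputable def arrow {P : Type*} [PartialOrder P] [BoundedOrder P] (f : P → P)
    (x y : P) : Set P :=
  if x ≤ y then {⊤} else minSet (upperBounds {f x, y})

set_option linter.unusedSectionVars false

section Aux

variable {P : Type*} [PartialOrder P] [BoundedOrder P] {f : P → P}

lemma mem_lb_pair {a b v : P} : v ∈ lowerBounds {a, b} ↔ v ≤ a ∧ v ≤ b := by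
  constructor
  · intro h
    exact ⟨h (by simp), h (by simp)⟩
  · rintro ⟨h1, h2⟩ c hc
    rcases hc with rfl | hc
    · exact h1
    · simpa using (Set.mem_singleton_iff.mp hc ▸ h2)

lemma mem_ub_pair {a b v : P} : v ∈ upperBounds {a, b} ↔ a ≤ v ∧ b ≤ v := by
  constructor
  · intro h
    exact ⟨h (by simp), h (by simp)⟩
  · rintro ⟨h1, h2⟩ c hc
    rcases hc with rfl | hc
    · exact h1
    · simpa using (Set.mem_singleton_iff.mp hc ▸ h2)

lemma anti_iff (hinv : AntitoneInvolution f) {a b : P} : a ≤ f b ↔ b ≤ f a := by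
  obtain ⟨hff, han⟩ := hinv
  constructor
  · intro h
    have := han _ _ h
    rwa [hff] at this
  · intro h
    have := han _ _ h
    rwa [hff] at this

lemma f_top (hinv : AntitoneInvolution f) : f (⊤ : P) = ⊥ := by
  obtain ⟨hff, han⟩ := hinv
  have h : f ⊤ ≤ f (f ⊥) := han _ _ le_top
  rw [hff] at h
  exact le_antisymm h bot_le

/-- The key lemma: one direction of the adjointness, in `L`-form. -/
lemma key {f : P → P} (hcons : ConsistentPoset f) (hdist : DistributivePoset P)
    {x y z : P} (hxy : ¬ x ≤ f y) (hyz : ¬ y ≤ z)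
    (h : ∀ v ∈ lowerBounds {x, y}, v ≤ z) :
    ∀ w ∈ lowerBounds {y, f z}, w ≤ f x := by
  obtain ⟨hinv, h8, h9⟩ := hcons
  obtain ⟨hff, han⟩ := hinv
  have hx0 : x ≠ ⊥ := fun hx => hxy (hx ▸ bot_le)
  have hy0 : y ≠ ⊥ := fun hy => hyz (hy ▸ bot_le)
  have hz1 : z ≠ ⊤ := fun hz => hyz (hz ▸ le_top)
  have hz0 : z ≠ ⊥ := by
    intro hz
    apply h9 x y hx0 hy0
    apply le_antisymm
    · intro v hv
      have := h v hv
      simp [hz ▸ this, le_bot_iff.mp (hz ▸ this)]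
    · intro v hv
      simp only [Set.mem_singleton_iff] at hv
      subst hv
      exact mem_lb_pair.mpr ⟨bot_le, bot_le⟩
  have hx1 : x ≠ ⊤ := by
    intro hx
    exact hyz (h y (mem_lb_pair.mpr ⟨hx ▸ le_top, le_rfl⟩))
  have h8' : lowerBounds {x, f x} = lowerBounds {z, f z} := h8 x z hx0 hx1 hz0 hz1
  intro w hw
  obtain ⟨hwy, hwz'⟩ := mem_lb_pair.mp hw
  -- Step A: every element of L(x,w) is ≤ f x
  have stepA : ∀ v ∈ lowerBounds {x, w}, v ≤ f x := by
    intro v hv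
    obtain ⟨hvx, hvw⟩ := mem_lb_pair.mp hv
    have hvz : v ≤ z := h v (mem_lb_pair.mpr ⟨hvx, hvw.trans hwy⟩)
    have hvzz : v ∈ lowerBounds {z, f z} := mem_lb_pair.mpr ⟨hvz, hvw.trans hwz'⟩
    rw [← h8'] at hvzz
    exact (mem_lb_pair.mp hvzz).2
  -- Step B: w ∈ L(U(x, f x) ∪ {w})
  have stepB : w ∈ lowerBounds (upperBounds {x, f x} ∪ {w}) := by
    intro u hu
    rcases hu with hu | hu
    · obtain ⟨hxu, hx'u⟩ := mem_ub_pair.mp hu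
      have h1 : f u ≤ f x := han _ _ hxu
      have h2 : f u ≤ x := by
        have := han _ _ hx'u
        rwa [hff] at this
      have hfu : f u ∈ lowerBounds {z, f z} := by
        rw [← h8']
        exact mem_lb_pair.mpr ⟨h2, h1⟩
      have h3 : f u ≤ z := (mem_lb_pair.mp hfu).1
      have h4 : f z ≤ u := by
        have := han _ _ h3
        rwa [hff] at this
      exact hwz'.trans h4
    · simp only [Set.mem_singleton_iff] at hu
      exact hu ▸ le_rfl
  -- Step C: apply distributivity
  rw [hdist x (f x) w] at stepB
  apply stepB
  intro v hv
  rcases hv with hv | hv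
  · exact stepA v hv
  · exact (mem_lb_pair.mp hv).1

lemma maxSet_le_iff [Finite P] (s : Set P) (z : P) :
    (∀ w ∈ maxSet s, w ≤ z) ↔ ∀ w ∈ s, w ≤ z := by
  constructor
  · intro h w hw
    obtain ⟨b, hwb, hb⟩ := Finite.exists_le_maximal hw
    exact hwb.trans (h b hb)
  · intro h w hw
    exact h w hw.prop

lemma le_minSet_iff [Finite P] (s : Set P) (z : P) :
    (∀ w ∈ minSet s, z ≤ w) ↔ ∀ w ∈ s, z ≤ w := by
  constructor
  · intro h w hw
    obtain ⟨b, hbw, hb⟩ := Finite.exists_le_minimal hw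
    exact (h b hb).trans hbw
  · intro h w hw
    exact h w hw.prop

end Aux

theorem stmt_9 {P : Type*} [PartialOrder P] [BoundedOrder P] [Finite P] (f : P → P)
    (hcons : ConsistentPoset f) (hdist : DistributivePoset P) :
    ∀ x y z : P,
      odot f x y = odot f y x ∧
      odot f x ⊤ = {x} ∧ odot f ⊤ x = {x} ∧
      ((∀ w ∈ odot f x y, w ≤ z) ↔ (∀ w ∈ arrow f y z, x ≤ w)) := by
  have hinv := hcons.1
  obtain ⟨hff, han⟩ := hinv
  intro x y z
  refine ⟨?_, ?_, ?_, ?_⟩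
  · -- commutativity
    unfold odot
    have hiff : x ≤ f y ↔ y ≤ f x := anti_iff hcons.1
    by_cases hc : x ≤ f y
    · rw [if_pos hc, if_pos (hiff.mp hc)]
    · rw [if_neg hc, if_neg (fun h => hc (hiff.mpr h)), Set.pair_comm]
  · -- x ⊙ ⊤ = {x}
    unfold odot
    rw [f_top hcons.1]
    by_cases hx : x ≤ (⊥ : P)
    · rw [if_pos hx, le_bot_iff.mp hx]
    · rw [if_neg hx]
      ext v
      simp only [maxSet, Set.mem_setOf_eq, Set.mem_singleton_iff]
      constructor
      · rintro ⟨hv, hmax⟩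
        have hvx : v ≤ x := (mem_lb_pair.mp hv).1
        have hxmem : x ∈ lowerBounds ({x, ⊤} : Set P) := mem_lb_pair.mpr ⟨le_rfl, le_top⟩
        exact le_antisymm hvx (hmax hxmem hvx)
      · rintro rfl
        exact ⟨mem_lb_pair.mpr ⟨le_rfl, le_top⟩,
          fun b hb _ => (mem_lb_pair.mp hb).1⟩
  · -- ⊤ ⊙ x = {x}
    unfold odot
    by_cases hx : (⊤ : P) ≤ f x
    · rw [if_pos hx]
      have : f x = ⊤ := le_antisymm le_top hx
      have hx' : x = ⊥ := by
        have := congrArg f this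
        rwa [hff, f_top ⟨hff, han⟩] at this
      rw [hx']
    · rw [if_neg hx]
      ext v
      simp only [maxSet, Set.mem_setOf_eq, Set.mem_singleton_iff]
      constructor
      · rintro ⟨hv, hmax⟩
        have hvx : v ≤ x := (mem_lb_pair.mp hv).2
        have hxmem : x ∈ lowerBounds ({⊤, x} : Set P) := mem_lb_pair.mpr ⟨le_top, le_rfl⟩
        exact le_antisymm hvx (hmax hxmem hvx)
      · rintro rfl
        exact ⟨mem_lb_pair.mpr ⟨le_top, le_rfl⟩,
          fun b hb _ => (mem_lb_pair.mp hb).2⟩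
  · -- adjointness
    unfold odot arrow
    by_cases hxy : x ≤ f y
    · rw [if_pos hxy]
      constructor
      · intro _ w hw
        by_cases hyz : y ≤ z
        · rw [if_pos hyz] at hw
          simp only [Set.mem_singleton_iff] at hw
          exact hw ▸ le_top
        · rw [if_neg hyz] at hw
          have : f y ≤ w := (mem_ub_pair.mp hw.prop).1
          exact hxy.trans this
      · intro _ w hw
        simp only [Set.mem_singleton_iff] at hw
        exact hw ▸ bot_le
    · rw [if_neg hxy]
      by_cases hyz : y ≤ z
      · rw [if_pos hyz]
        constructor
        · intro _ w hw
          simp only [Set.mem_singleton_iff] at hw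
          exact hw ▸ le_top
        · intro _ w hw
          exact ((mem_lb_pair.mp hw.prop).2).trans hyz
      · rw [if_neg hyz]
        rw [maxSet_le_iff, le_minSet_iff]
        constructor
        · intro h w hw
          obtain ⟨hfyw, hzw⟩ := mem_ub_pair.mp hw
          -- key applied forward: L(y, f z) ⊆ L(f x); apply to f w
          have hkey := key hcons hdist hxy hyz h
          have hfw : f w ∈ lowerBounds {y, f z} := by
            apply mem_lb_pair.mpr
            constructor
            · have := han _ _ hfyw
              rwa [hff] at this
            · exact han _ _ hzw
          have := hkey (f w) hfw
          -- f w ≤ f x gives x ≤ w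
          have := han _ _ this
          rwa [hff, hff] at this
        · intro h v hv
          obtain ⟨hvx, hvy⟩ := mem_lb_pair.mp hv
          -- apply key with (f z, y, f x)
          have hc1 : ¬ f z ≤ f y := fun hc => by
            have := han _ _ hc
            rw [hff, hff] at this
            exact hyz this
          have hc2 : ¬ y ≤ f x := fun hc => hxy ((anti_iff ⟨hff, han⟩).mpr hc)
          have hpre : ∀ v ∈ lowerBounds ({f z, y} : Set P), v ≤ f x := by
            intro u hu
            obtain ⟨huz, huy⟩ := mem_lb_pair.mp hu
            -- u ≤ f z, u ≤ y; need u ≤ f x, i.e. x ≤ f u... use h: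
            -- h : ∀ w ∈ U(f y, z), x ≤ w. take w = f u.
            have hw : f u ∈ upperBounds ({f y, z} : Set P) := by
              apply mem_ub_pair.mpr
              constructor
              · exact han _ _ huy
              · have := han _ _ huz
                rwa [hff] at this
            have := h (f u) hw
            exact (anti_iff ⟨hff, han⟩).mp this
          have hkey := key hcons hdist hc1 hc2 hpre
          have hv' : v ∈ lowerBounds ({y, f (f x)} : Set P) := by
            rw [hff]
            exact mem_lb_pair.mpr ⟨hvy, hvx⟩
          have := hkey v hv'
          rwa [hff] at this
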